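/- If p = p(n) ≫ ((log n)/n)^{1/2}, then for every fixed ε > 0, asymptotically almost surely G ∈ G(n,p) satisfies: every non-empty subgraph H ⊆ G with minimum degree δ(H) ≥ (1/2 + ε)pn is connected. -/

import Mathlib

open MeasureTheory Filter Topology SimpleGraph

namespace MonochromaticTrees

variable {V : Type*} {C : Type*}

/-- A subgraph `T` of `G` is a *monochromatic tree* with respect to the
edge-colouring `φ` if it is either empty or a tree, and all of its edges
receive the same colour under `φ`. -/
def IsMonoTree (G : SimpleGraph V) (φ : Sym2 V → C) (T : G.Subgraph) : Prop :=
  (T.verts = ∅ ∨ T.coe.IsTree) ∧ ∃ c : C, ∀ e ∈ T.edgeSet, φ e = c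

/-- `φ → Π₂`: the vertex set can be partitioned into the vertex sets of two
monochromatic trees. -/
def MonoTreePartition2 (G : SimpleGraph V) (φ : Sym2 V → Bool) : Prop :=
  ∃ T₁ T₂ : G.Subgraph, IsMonoTree G φ T₁ ∧ IsMonoTree G φ T₂ ∧
    Disjoint T₁.verts T₂.verts ∧ T₁.verts ∪ T₂.verts = Set.univ

/-- `G → Π₂`: every 2-colouring of the edges admits a partition of the vertex
set into the vertex sets of two monochromatic trees. -/
def ArrowPi2 (G : SimpleGraph V) : Prop :=
  ∀ φ : Sym2 V → Bool, MonoTreePartition2 G φ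

/-- Partition of the vertex set into the vertex sets of `r` monochromatic
trees for an `r`-colouring `φ`. -/
def MonoTreePartitionR (G : SimpleGraph V) (r : ℕ) (φ : Sym2 V → Fin r) : Prop :=
  ∃ T : Fin r → G.Subgraph, (∀ i, IsMonoTree G φ (T i)) ∧
    (Set.univ.PairwiseDisjoint fun i => (T i).verts) ∧ (⋃ i, (T i).verts) = Set.univ

/-- `G → Π_r`. -/
def ArrowPiR (G : SimpleGraph V) (r : ℕ) : Prop :=
  ∀ φ : Sym2 V → Fin r, MonoTreePartitionR G r φ

/-- There is a monochromatic `u`–`v` path. -/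
def MonoPath (G : SimpleGraph V) (φ : Sym2 V → C) (u v : V) : Prop :=
  ∃ w : G.Walk u v, w.IsPath ∧ ∃ c : C, ∀ e ∈ w.edges, φ e = c

/-- The spanning subgraph of `G` consisting of the edges of colour `c`. -/
def colourGraph (G : SimpleGraph V) (φ : Sym2 V → Bool) (c : Bool) : SimpleGraph V :=
  SimpleGraph.fromEdgeSet {e | e ∈ G.edgeSet ∧ φ e = c}

/-- The set `R^φ` (for `c = true`, i.e. red) resp. `B^φ` (for `c = false`,
i.e. blue) of vertices `v` with `d_c(v) > d(v)/3`. -/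
def bigColourSet (G : SimpleGraph V) (φ : Sym2 V → Bool) (c : Bool) : Set V :=
  {v | (G.neighborSet v).ncard < 3 * ((colourGraph G φ c).neighborSet v).ncard}

/-- A colouring is extremal if there are distinct `r ∈ R^φ`, `b ∈ B^φ` with no
monochromatic `r`–`b` path. -/
def Extremal (G : SimpleGraph V) (φ : Sym2 V → Bool) : Prop :=
  ∃ r ∈ bigColourSet G φ true, ∃ b ∈ bigColourSet G φ false,
    r ≠ b ∧ ¬ MonoPath G φ r b

/-- The number of edges of `G` with one endpoint in `U` and the other in `W`. -/
noncomputable def edgesBetween (G : SimpleGraph V) (U W : Set V) : ℕ :=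
  {e ∈ G.edgeSet | ∃ u ∈ U, ∃ w ∈ W, e = s(u, w)}.ncard

/-- The number of edges of `G` with both endpoints in `A`. -/
noncomputable def edgesWithin (G : SimpleGraph V) (A : Set V) : ℕ :=
  {e ∈ G.edgeSet | ∀ v ∈ e, v ∈ A}.ncard

/-- The distribution of the binomial random graph `G(n,p)`: each potential
edge appears independently with probability `p`. -/
noncomputable def gnp (n : ℕ) (p : ℝ) : Measure (Sym2 (Fin n) → Bool) :=
  Measure.pi fun _ => (PMF.bernoulli (min (Real.toNNReal p) 1) (min_le_right _ _)).toMeasure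

/-- The graph encoded by an outcome `ω` of the edge indicators. -/
def graphOf {n : ℕ} (ω : Sym2 (Fin n) → Bool) : SimpleGraph (Fin n) :=
  SimpleGraph.fromEdgeSet {e | ω e = true}



/-! ### Auxiliary machinery for Statement 7 -/

lemma meas_all {n : ℕ} (s : Set (Sym2 (Fin n) → Bool)) : MeasurableSet s := by
  have h1 : ∀ ω : Sym2 (Fin n) → Bool, MeasurableSet {ω} := by
    intro ω
    have : {ω} = Set.pi Set.univ (fun e => {ω e}) := by
      ext x; simp [funext_iff, Set.eq_singleton_iff_unique_mem]
    rw [this]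
    exact MeasurableSet.univ_pi (fun e => MeasurableSet.singleton _)
  have : s = ⋃ ω ∈ s, {ω} := by simp
  rw [this]
  exact MeasurableSet.biUnion (Set.to_countable s) (fun ω _ => h1 ω)

lemma gnp_prob (n : ℕ) (p : ℝ) : IsProbabilityMeasure (gnp n p) := by
  unfold gnp; infer_instance

lemma gnp_singleton {n : ℕ} (p : ℝ) (hp0 : 0 ≤ p) (hp1 : p ≤ 1) (ω : Sym2 (Fin n) → Bool) :
    gnp n p {ω} = ENNReal.ofReal (∏ e : Sym2 (Fin n), (if ω e then p else 1 - p)) := by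
  have hmin : min (Real.toNNReal p) 1 = Real.toNNReal p := by
    rw [min_eq_left]; exact Real.toNNReal_le_one.2 hp1
  have hco : ((Real.toNNReal p : NNReal) : ENNReal) = ENNReal.ofReal p := rfl
  have hs : {ω} = Set.pi Set.univ (fun e => {ω e}) := by
    ext x; simp [funext_iff, Set.eq_singleton_iff_unique_mem]
  rw [gnp, hs, MeasureTheory.Measure.pi_pi, ENNReal.ofReal_prod_of_nonneg]
  · congr 1; ext e
    rw [PMF.toMeasure_apply_singleton _ _ (measurableSet_singleton _), PMF.bernoulli_apply, hmin]
    cases h : ω e <;> simp [ENNReal.ofReal_sub, hp0, ENNReal.coe_sub, hco]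
  · intro e _; cases ω e <;> simp [hp0, hp1, sub_nonneg]

lemma gnp_finset {n : ℕ} (μ : MeasureTheory.Measure (Sym2 (Fin n) → Bool))
    (A : Finset (Sym2 (Fin n) → Bool)) :
    μ ↑A = ∑ ω ∈ A, μ {ω} := by
  have : (↑A : Set _) = ⋃ ω ∈ A, {ω} := by ext x; simp
  rw [this, MeasureTheory.measure_biUnion_finset ?_ (fun ω _ => meas_all _)]
  intro a _ b _ hab
  simp [Set.disjoint_singleton, hab]

lemma chernoff_core {ι : Type*} [Fintype ι] [DecidableEq ι] (w : Bool → ℝ)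
    (hw : ∀ b, 0 ≤ w b) (hw1 : w false + w true = 1)
    (T : Finset ι) (lam k : ℝ) (hlam : 1 ≤ lam) (hk : 0 ≤ k)
    (A : Finset ((ι → Bool)))
    (hA : ∀ ω ∈ A, k ≤ (((T.filter (fun e => ω e = true)).card : ℝ))) :
    ∑ ω ∈ A, ∏ e, w (ω e) ≤
      Real.exp (-(k * Real.log lam)) * (w false + w true * lam) ^ T.card := by
  have hlam0 : 0 < lam := lt_of_lt_of_le one_pos hlam
  set X : (ι → Bool) → ℕ := fun ω => (T.filter (fun e => ω e = true)).card with hX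
  have step1 : ∀ ω ∈ A, ∏ e, w (ω e) ≤
      Real.exp (-(k * Real.log lam)) * (lam ^ X ω * ∏ e, w (ω e)) := by
    intro ω hω
    have h1 : (1 : ℝ) ≤ Real.exp (-(k * Real.log lam)) * lam ^ X ω := by
      have hp : lam ^ X ω = Real.exp ((X ω : ℝ) * Real.log lam) := by
        rw [← Real.log_pow, Real.exp_log (pow_pos hlam0 _)]
      rw [hp, ← Real.exp_add]
      have h0 : 0 ≤ -(k * Real.log lam) + (X ω : ℝ) * Real.log lam := by
        nlinarith [Real.log_nonneg hlam, hA ω hω]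
      linarith [Real.one_le_exp h0]
    calc ∏ e, w (ω e) = 1 * ∏ e, w (ω e) := by ring
      _ ≤ (Real.exp (-(k * Real.log lam)) * lam ^ X ω) * ∏ e, w (ω e) :=
          mul_le_mul_of_nonneg_right h1 (Finset.prod_nonneg fun e _ => hw _)
      _ = Real.exp (-(k * Real.log lam)) * (lam ^ X ω * ∏ e, w (ω e)) := by ring
  have step3 : ∀ ω : ι → Bool, lam ^ X ω * ∏ e, w (ω e)
      = ∏ e, (w (ω e) * (if e ∈ T ∧ ω e = true then lam else 1)) := by
    intro ω
    rw [Finset.prod_mul_distrib]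
    rw [mul_comm]
    congr 1
    rw [Finset.prod_ite, Finset.prod_const, Finset.prod_const, one_pow, mul_one]
    have hfe : Finset.filter (fun e => e ∈ T ∧ ω e = true) Finset.univ
        = Finset.filter (fun e => ω e = true) T := by
      ext e; simp
    rw [hfe, hX]
  have step4 : ∑ ω : ι → Bool, ∏ e, (w (ω e) * (if e ∈ T ∧ ω e = true then lam else 1))
      = ∏ e, ∑ b : Bool, (w b * (if e ∈ T ∧ b = true then lam else 1)) := by
    rw [Finset.prod_univ_sum (fun _ => (Finset.univ : Finset Bool))
      (fun e b => w b * (if e ∈ T ∧ b = true then lam else 1))]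
    rw [Fintype.piFinset_univ]
  have step5 : ∏ e, ∑ b : Bool, (w b * (if e ∈ T ∧ b = true then lam else 1))
      = (w false + w true * lam) ^ T.card := by
    have h5 : ∀ e : ι, ∑ b : Bool, (w b * (if e ∈ T ∧ b = true then lam else 1))
        = if e ∈ T then (w false + w true * lam) else 1 := by
      intro e
      by_cases h : e ∈ T <;> simp [Fintype.sum_bool, h, hw1] <;> ring_nf <;> linarith [hw1]
    rw [Finset.prod_congr rfl (fun e _ => h5 e), Finset.prod_ite_mem,
      Finset.univ_inter, Finset.prod_const]
  calc ∑ ω ∈ A, ∏ e, w (ω e)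
      ≤ ∑ ω ∈ A, Real.exp (-(k * Real.log lam)) * (lam ^ X ω * ∏ e, w (ω e)) :=
        Finset.sum_le_sum step1
    _ ≤ ∑ ω : ι → Bool, Real.exp (-(k * Real.log lam)) * (lam ^ X ω * ∏ e, w (ω e)) := by
        apply Finset.sum_le_sum_of_subset_of_nonneg (Finset.subset_univ A)
        intro ω _ _
        have := Finset.prod_nonneg (fun e (_ : e ∈ Finset.univ) => hw (ω e))
        positivity
    _ = Real.exp (-(k * Real.log lam)) * ∑ ω : ι → Bool, (lam ^ X ω * ∏ e, w (ω e)) := by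
        rw [Finset.mul_sum]
    _ = Real.exp (-(k * Real.log lam)) * (w false + w true * lam) ^ T.card := by
        rw [Finset.sum_congr rfl (fun ω _ => step3 ω), step4, step5]

lemma gnp_event_le {n : ℕ} (p : ℝ) (hp0 : 0 ≤ p) (hp1 : p ≤ 1)
    (T : Finset (Sym2 (Fin n))) (lam k : ℝ) (hlam : 1 ≤ lam) (hk : 0 ≤ k) :
    gnp n p {ω | k ≤ ((T.filter (fun e => ω e = true)).card : ℝ)}
      ≤ ENNReal.ofReal (Real.exp (-(k * Real.log lam)) * ((1 - p) + p * lam) ^ T.card) := by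
  classical
  set E : Set (Sym2 (Fin n) → Bool) := {ω | k ≤ ((T.filter (fun e => ω e = true)).card : ℝ)}
    with hE
  set A : Finset (Sym2 (Fin n) → Bool) := (Set.toFinite E).toFinset with hA
  have hcoe : (↑A : Set _) = E := Set.Finite.coe_toFinset _
  set w : Bool → ℝ := fun b => if b then p else 1 - p with hw
  have hwnn : ∀ b, 0 ≤ w b := by intro b; cases b <;> simp [hw, hp0, hp1]
  have h1 : gnp n p E = ENNReal.ofReal (∑ ω ∈ A, ∏ e, w (ω e)) := by
    rw [← hcoe, gnp_finset, ENNReal.ofReal_sum_of_nonneg]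
    · refine Finset.sum_congr rfl fun ω _ => ?_
      rw [gnp_singleton p hp0 hp1 ω]
    · intro ω _
      exact Finset.prod_nonneg fun e _ => hwnn _
  rw [h1]
  apply ENNReal.ofReal_le_ofReal
  have := chernoff_core w hwnn (by simp [hw]) T lam k hlam hk A
    (fun ω hω => by rw [hA, Set.Finite.mem_toFinset] at hω; exact hω)
  simpa [hw] using this

/-- The potential edges inside a vertex set `S`. -/
noncomputable def edgeT {n : ℕ} (S : Finset (Fin n)) : Finset (Sym2 (Fin n)) :=
  S.offDiag.image (Function.uncurry Sym2.mk)

/-- The number of edges of the graph encoded by `ω` inside `S`. -/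
noncomputable def XS {n : ℕ} (S : Finset (Fin n)) (ω : Sym2 (Fin n) → Bool) : ℕ :=
  ((edgeT S).filter (fun e => ω e = true)).card

/-- The Chernoff exponent constant. -/
noncomputable def cc (ε : ℝ) : ℝ := (1/4 + ε/2) * Real.log (1+ε) - ε/4

lemma cc_pos {ε : ℝ} (hε : 0 < ε) : 0 < cc ε := by
  have h1 : Real.log (1/(1+ε)) < 1/(1+ε) - 1 := by
    apply Real.log_lt_sub_one_of_pos (by positivity)
    intro h
    rw [div_eq_one_iff_eq (by positivity)] at h
    linarith
  rw [Real.log_div one_ne_zero (by positivity), Real.log_one] at h1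
  have h2 : ε/(1+ε) < Real.log (1+ε) := by
    have : 1/(1+ε) - 1 = -(ε/(1+ε)) := by field_simp; ring
    rw [this] at h1; linarith
  rw [cc]
  have hkey : (1/4 + ε/2) * (ε/(1+ε)) - ε/4 = (ε*ε)/(4*(1+ε)) := by field_simp; ring
  have h4 : (0:ℝ) ≤ (ε*ε)/(4*(1+ε)) := by positivity
  nlinarith [mul_lt_mul_of_pos_left h2 (by positivity : (0:ℝ) < 1/4 + ε/2)]

lemma per_set {n : ℕ} (p ε : ℝ) (hp0 : 0 ≤ p) (hp1 : p ≤ 1) (hε : 0 < ε)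
    (S : Finset (Fin n)) (hS : 2 * S.card ≤ n) :
    gnp n p {ω | ((1/2+ε)*p*n) * S.card ≤ 2 * (XS S ω : ℝ)}
      ≤ ENNReal.ofReal (Real.exp (-(cc ε * p * S.card * n))) := by
  classical
  set s : ℝ := (S.card : ℝ) with hs
  have hs0 : 0 ≤ s := Nat.cast_nonneg _
  have hn0 : 0 ≤ (n : ℝ) := Nat.cast_nonneg _
  have hsn : 2 * s ≤ (n:ℝ) := by rw [hs]; exact_mod_cast hS
  set k : ℝ := (1/2+ε)*p*(n:ℝ)*s/2 with hk
  have hk0 : 0 ≤ k := by positivity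
  have hsub : {ω : Sym2 (Fin n) → Bool | ((1/2+ε)*p*n) * S.card ≤ 2 * (XS S ω : ℝ)}
      ⊆ {ω | k ≤ (((edgeT S).filter (fun e => ω e = true)).card : ℝ)} := by
    intro ω hω
    simp only [Set.mem_setOf_eq] at hω ⊢
    rw [XS] at hω
    rw [hk]; linarith
  refine le_trans (MeasureTheory.measure_mono hsub) (le_trans
    (gnp_event_le p hp0 hp1 (edgeT S) (1+ε) k (by linarith) hk0) ?_)
  apply ENNReal.ofReal_le_ofReal
  have hlog : 0 ≤ Real.log (1+ε) := Real.log_nonneg (by linarith)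
  set N : ℕ := (edgeT S).card with hN
  have hNval : (N : ℝ) ≤ s * s / 2 := by
    have : N = (S.card).choose 2 := Sym2.card_image_offDiag S
    rw [this, Nat.cast_choose_two]
    nlinarith
  have h1 : (1 - p) + p * (1+ε) = 1 + p*ε := by ring
  have h2 : ((1-p) + p*(1+ε)) ^ N ≤ Real.exp (p*ε*N) := by
    rw [h1]
    calc (1 + p*ε)^N ≤ (Real.exp (p*ε))^N := by
          apply pow_le_pow_left₀ (by positivity)
          linarith [Real.add_one_le_exp (p*ε)]
      _ = Real.exp (p*ε*N) := by rw [← Real.exp_nat_mul]; ring_nf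
  calc Real.exp (-(k * Real.log (1+ε))) * ((1-p) + p*(1+ε)) ^ N
      ≤ Real.exp (-(k * Real.log (1+ε))) * Real.exp (p*ε*N) := by
        apply mul_le_mul_of_nonneg_left h2 (Real.exp_nonneg _)
    _ = Real.exp (p*ε*N - k * Real.log (1+ε)) := by rw [← Real.exp_add]; ring_nf
    _ ≤ Real.exp (-(cc ε * p * s * n)) := by
        apply Real.exp_le_exp.2
        rw [cc, hk]
        have hterm : p*ε*(N:ℝ) ≤ p*ε*(s*n/4) := by
          apply mul_le_mul_of_nonneg_left _ (by positivity)
          nlinarith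
        nlinarith [mul_nonneg (mul_nonneg hp0 hs0) hn0,
          mul_nonneg (mul_nonneg (mul_nonneg hp0 hs0) hn0) hlog]

lemma bad_bound {n : ℕ} (p ε : ℝ) (hp0 : 0 ≤ p) (hp1 : p ≤ 1) (hε : 0 < ε) :
    gnp n p {ω | ∃ S : Finset (Fin n), S.Nonempty ∧ 2 * S.card ≤ n ∧
        ((1/2+ε)*p*n) * S.card ≤ 2 * (XS S ω : ℝ)}
      ≤ ENNReal.ofReal (Real.exp ((n : ℝ) * Real.exp (-(cc ε * p * n))) - 1) := by
  classical
  set q : ℝ := Real.exp (-(cc ε * p * n)) with hq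
  have hq0 : 0 ≤ q := Real.exp_nonneg _
  set F : Finset (Finset (Fin n)) :=
    Finset.univ.filter (fun S => S.Nonempty ∧ 2 * S.card ≤ n) with hF
  have hsub : {ω : Sym2 (Fin n) → Bool | ∃ S : Finset (Fin n), S.Nonempty ∧ 2 * S.card ≤ n ∧
        ((1/2+ε)*p*n) * S.card ≤ 2 * (XS S ω : ℝ)}
      ⊆ ⋃ S ∈ F, {ω | ((1/2+ε)*p*n) * S.card ≤ 2 * (XS S ω : ℝ)} := by
    intro ω hω
    obtain ⟨S, h1, h2, h3⟩ := hω
    exact Set.mem_biUnion (show S ∈ F by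
      rw [hF, Finset.mem_filter]; exact ⟨Finset.mem_univ S, h1, h2⟩) h3
  refine le_trans (MeasureTheory.measure_mono hsub)
    (le_trans (MeasureTheory.measure_biUnion_finset_le F _) ?_)
  have hstep : ∀ S ∈ F, gnp n p {ω | ((1/2+ε)*p*n) * S.card ≤ 2 * (XS S ω : ℝ)}
      ≤ ENNReal.ofReal (q ^ S.card) := by
    intro S hS
    rw [hF, Finset.mem_filter] at hS
    refine le_trans (per_set p ε hp0 hp1 hε S hS.2.2) (le_of_eq ?_)
    congr 1
    rw [hq, ← Real.exp_nat_mul]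
    congr 1; ring
  refine le_trans (Finset.sum_le_sum hstep) ?_
  rw [← ENNReal.ofReal_sum_of_nonneg (fun S _ => by positivity)]
  apply ENNReal.ofReal_le_ofReal
  have hsplit : ∑ S ∈ F, q ^ S.card
      ≤ ∑ S ∈ Finset.univ.filter (fun S : Finset (Fin n) => S.Nonempty), q ^ S.card := by
    apply Finset.sum_le_sum_of_subset_of_nonneg
    · intro S hS; rw [hF, Finset.mem_filter] at hS; simp [hS.2.1]
    · intro S _ _; positivity
  have htotal : ∑ S : Finset (Fin n), q ^ S.card = (1 + q) ^ n := by
    have h := Fintype.prod_add (fun _ : Fin n => q) (fun _ : Fin n => (1:ℝ))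
    simp only [Finset.prod_const, Finset.card_univ, Fintype.card_fin, one_pow, mul_one] at h
    rw [← h]
    ring_nf
  have hne : ∑ S ∈ Finset.univ.filter (fun S : Finset (Fin n) => S.Nonempty), q ^ S.card
      = (1 + q) ^ n - 1 := by
    have h1 := Finset.sum_filter_add_sum_filter_not (Finset.univ : Finset (Finset (Fin n)))
      (fun S => S.Nonempty) (fun S => q ^ S.card)
    have h2 : Finset.univ.filter (fun S : Finset (Fin n) => ¬ S.Nonempty) = {∅} := by
      ext S; simp [Finset.not_nonempty_iff_eq_empty]
    rw [h2] at h1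
    simp only [Finset.sum_singleton, Finset.card_empty, pow_zero] at h1
    rw [htotal] at h1
    linarith
  have hexp : (1 + q) ^ n ≤ Real.exp ((n:ℝ) * q) := by
    calc (1 + q)^n ≤ (Real.exp q)^n := by
          apply pow_le_pow_left₀ (by positivity)
          linarith [Real.add_one_le_exp q]
      _ = Real.exp ((n:ℝ)*q) := by rw [← Real.exp_nat_mul]
  rw [hne] at hsplit
  linarith

lemma closed_set_edges {n : ℕ} (ω : Sym2 (Fin n) → Bool) (d : ℝ)
    (H : (graphOf ω).Subgraph) (U : Finset (Fin n))
    (hclosed : ∀ v ∈ U, ∀ w, H.Adj v w → w ∈ U)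
    (hdeg : ∀ v ∈ U, d ≤ ((H.neighborSet v).ncard : ℝ)) :
    d * U.card ≤ 2 * (XS U ω : ℝ) := by
  classical
  set K : SimpleGraph (Fin n) :=
    { Adj := fun u v => u ∈ U ∧ v ∈ U ∧ H.Adj u v
      symm := ⟨by intro u v h; exact ⟨h.2.1, h.1, h.2.2.symm⟩⟩
      loopless := ⟨by
        intro u h
        exact (graphOf ω).loopless.irrefl u (H.adj_sub h.2.2)⟩ } with hK
  have hKadj : ∀ u v, K.Adj u v ↔ (u ∈ U ∧ v ∈ U ∧ H.Adj u v) := fun _ _ => Iff.rfl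
  have hdegK : ∀ v ∈ U, d ≤ (K.degree v : ℝ) := by
    intro v hv
    have hset : H.neighborSet v = K.neighborSet v := by
      ext w
      simp only [SimpleGraph.mem_neighborSet, SimpleGraph.Subgraph.mem_neighborSet, hKadj]
      exact ⟨fun h => ⟨hv, hclosed v hv w h, h⟩, fun h => h.2.2⟩
    have h0 := hdeg v hv
    rw [hset, Set.ncard_eq_toFinset_card', Set.toFinset_card] at h0
    rwa [show Fintype.card ↥(K.neighborSet v) = K.degree v from
      SimpleGraph.card_neighborSet_eq_degree K v] at h0
  have hsum : d * U.card ≤ ∑ v : Fin n, (K.degree v : ℝ) := by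
    calc d * U.card = ∑ _v ∈ U, d := by rw [Finset.sum_const]; ring
      _ ≤ ∑ v ∈ U, (K.degree v : ℝ) := Finset.sum_le_sum hdegK
      _ ≤ ∑ v : Fin n, (K.degree v : ℝ) := by
          apply Finset.sum_le_sum_of_subset_of_nonneg (Finset.subset_univ U)
          intro v _ _; positivity
  have hhand : ∑ v : Fin n, K.degree v = 2 * K.edgeFinset.card :=
    SimpleGraph.sum_degrees_eq_twice_card_edges K
  have hsub : K.edgeFinset ⊆ (edgeT U).filter (fun e => ω e = true) := by
    intro e he
    rw [SimpleGraph.mem_edgeFinset] at he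
    induction e with
    | _ u v =>
      rw [SimpleGraph.mem_edgeSet] at he
      obtain ⟨hu, hv, hadj⟩ := he
      have hne : u ≠ v := by rintro rfl; exact K.loopless.irrefl u ⟨hu, hv, hadj⟩
      rw [Finset.mem_filter]
      constructor
      · exact Finset.mem_image.2 ⟨(u, v), Finset.mem_offDiag.2 ⟨hu, hv, hne⟩, rfl⟩
      · have hG := H.adj_sub hadj
        rw [graphOf, SimpleGraph.fromEdgeSet_adj] at hG
        exact hG.1
  have hXS : (K.edgeFinset.card : ℝ) ≤ (XS U ω : ℝ) := by
    exact_mod_cast Nat.cast_le.2 (Finset.card_le_card hsub)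
  calc d * U.card ≤ ∑ v : Fin n, (K.degree v : ℝ) := hsum
    _ = 2 * (K.edgeFinset.card : ℝ) := by exact_mod_cast hhand
    _ ≤ 2 * (XS U ω : ℝ) := by linarith

lemma det_lemma {n : ℕ} (ω : Sym2 (Fin n) → Bool) (d : ℝ)
    (hA : ∀ S : Finset (Fin n), S.Nonempty → 2 * S.card ≤ n →
      ¬ (d * S.card ≤ 2 * (XS S ω : ℝ)))
    (H : (graphOf ω).Subgraph) (hne : H.verts.Nonempty)
    (hdeg : ∀ v ∈ H.verts, d ≤ ((H.neighborSet v).ncard : ℝ)) :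
    H.coe.Connected := by
  classical
  rw [SimpleGraph.connected_iff]
  refine ⟨?_, hne.to_subtype⟩
  by_contra hpre
  rw [SimpleGraph.Preconnected] at hpre
  push_neg at hpre
  obtain ⟨a, b, hab⟩ := hpre
  set C : Finset (Fin n) :=
    Finset.univ.filter (fun v => ∃ h : v ∈ H.verts, H.coe.Reachable a ⟨v, h⟩) with hC
  set D : Finset (Fin n) :=
    Finset.univ.filter (fun v => ∃ h : v ∈ H.verts, ¬ H.coe.Reachable a ⟨v, h⟩) with hD
  have hCmem : ∀ v, v ∈ C ↔ ∃ h : v ∈ H.verts, H.coe.Reachable a ⟨v, h⟩ := by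
    intro v; simp [hC]
  have hDmem : ∀ v, v ∈ D ↔ ∃ h : v ∈ H.verts, ¬ H.coe.Reachable a ⟨v, h⟩ := by
    intro v; simp [hD]
  have hstep : ∀ (v w : Fin n) (hv : v ∈ H.verts), H.Adj v w →
      ∃ hw : w ∈ H.verts, H.coe.Adj ⟨v, hv⟩ ⟨w, hw⟩ := by
    intro v w hv hadj
    exact ⟨H.edge_vert hadj.symm, hadj⟩
  have hCclosed : ∀ v ∈ C, ∀ w, H.Adj v w → w ∈ C := by
    intro v hv w hadj
    obtain ⟨h1, hr⟩ := (hCmem v).1 hv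
    obtain ⟨hw, hadj'⟩ := hstep v w h1 hadj
    exact (hCmem w).2 ⟨hw, hr.trans hadj'.reachable⟩
  have hDclosed : ∀ v ∈ D, ∀ w, H.Adj v w → w ∈ D := by
    intro v hv w hadj
    obtain ⟨h1, hr⟩ := (hDmem v).1 hv
    obtain ⟨hw, hadj'⟩ := hstep v w h1 hadj
    refine (hDmem w).2 ⟨hw, fun hreach => hr (hreach.trans hadj'.symm.reachable)⟩
  have hCdeg : ∀ v ∈ C, d ≤ ((H.neighborSet v).ncard : ℝ) := by
    intro v hv; exact hdeg v ((hCmem v).1 hv).choose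
  have hDdeg : ∀ v ∈ D, d ≤ ((H.neighborSet v).ncard : ℝ) := by
    intro v hv; exact hdeg v ((hDmem v).1 hv).choose
  have haC : (a : Fin n) ∈ C := (hCmem a).2 ⟨a.2, by exact SimpleGraph.Reachable.refl _⟩
  have hbD : (b : Fin n) ∈ D := (hDmem b).2 ⟨b.2, by
    intro h
    exact hab (by convert h)⟩
  have hCn : ¬ (2 * C.card ≤ n) := fun h =>
    hA C ⟨a, haC⟩ h (closed_set_edges ω d H C hCclosed hCdeg)
  have hDn : ¬ (2 * D.card ≤ n) := fun h =>
    hA D ⟨b, hbD⟩ h (closed_set_edges ω d H D hDclosed hDdeg)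
  have hdisj : Disjoint C D := by
    rw [Finset.disjoint_left]
    intro v hv hv'
    obtain ⟨h1, hr⟩ := (hCmem v).1 hv
    obtain ⟨h2, hnr⟩ := (hDmem v).1 hv'
    exact hnr (by convert hr)
  have hcard : C.card + D.card ≤ n := by
    have := Finset.card_le_univ (C ∪ D)
    rw [Finset.card_union_of_disjoint hdisj] at this
    simpa using this
  omega

/-- If `p ≫ ((log n)/n)^{1/2}`, then for every fixed `ε > 0`,
a.a.s. every non-empty subgraph `H ⊆ G` with minimum degree at least
`(1/2 + ε)pn` is connected. -/
theorem stmt_7 (p : ℕ → ℝ) (hp : ∀ n, 0 ≤ p n ∧ p n ≤ 1)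
    (hgrow : Tendsto (fun n : ℕ => p n / Real.sqrt (Real.log n / n)) atTop atTop)
    (ε : ℝ) (hε : 0 < ε) :
    Tendsto (fun n : ℕ => gnp n (p n)
      {ω | ∀ H : (graphOf ω).Subgraph, H.verts.Nonempty →
              (∀ v ∈ H.verts, (1 / 2 + ε) * p n * n ≤ ((H.neighborSet v).ncard : ℝ)) →
              H.coe.Connected})
      atTop (𝓝 1) := by
  classical
  have hcpos : 0 < cc ε := cc_pos hε
  -- the bad event
  set Bad : ∀ n : ℕ, Set (Sym2 (Fin n) → Bool) := fun n =>
    {ω | ∃ S : Finset (Fin n), S.Nonempty ∧ 2 * S.card ≤ n ∧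
        ((1/2+ε)*(p n)*(n:ℝ)) * S.card ≤ 2 * (XS S ω : ℝ)} with hBad
  set Good : ∀ n : ℕ, Set (Sym2 (Fin n) → Bool) := fun n =>
    {ω | ∀ H : (graphOf ω).Subgraph, H.verts.Nonempty →
        (∀ v ∈ H.verts, (1 / 2 + ε) * p n * n ≤ ((H.neighborSet v).ncard : ℝ)) →
        H.coe.Connected} with hGood
  haveI : ∀ n : ℕ, IsProbabilityMeasure (gnp n (p n)) := fun n => gnp_prob n (p n)
  -- deterministic inclusion
  have hincl : ∀ n : ℕ, (Bad n)ᶜ ⊆ Good n := by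
    intro n ω hω
    simp only [hBad, Set.mem_compl_iff, Set.mem_setOf_eq] at hω
    push_neg at hω
    intro H hne hdeg
    refine det_lemma ω ((1/2+ε)*(p n)*(n:ℝ)) ?_ H hne hdeg
    intro S h1 h2
    exact not_le.2 (hω S h1 h2)
  -- key asymptotic estimate
  have hkey : ∀ᶠ n : ℕ in atTop,
      (n:ℝ) * Real.exp (-(cc ε * p n * n)) ≤ 1/(n:ℝ) := by
    have hev1 : ∀ᶠ n : ℕ in atTop,
        (2/cc ε) ≤ p n / Real.sqrt (Real.log n / n) := hgrow.eventually_ge_atTop _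
    filter_upwards [hev1, eventually_ge_atTop 3] with n h1 h2
    have hn3 : (3:ℝ) ≤ (n:ℝ) := by exact_mod_cast h2
    have hn0 : (0:ℝ) < (n:ℝ) := by linarith
    have hlogpos : 0 < Real.log n := Real.log_pos (by linarith)
    have hsq : 0 < Real.sqrt (Real.log n / n) := Real.sqrt_pos.2 (by positivity)
    have hp_ge : (2/cc ε) * Real.sqrt (Real.log n / n) ≤ p n := (le_div_iff₀ hsq).1 h1
    have hsqrtmul : Real.sqrt (Real.log n / n) * (n:ℝ)
        = Real.sqrt (Real.log n) * Real.sqrt n := by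
      have hnn : (n:ℝ) = Real.sqrt n * Real.sqrt n := (Real.mul_self_sqrt hn0.le).symm
      calc Real.sqrt (Real.log n / n) * (n:ℝ)
          = (Real.sqrt (Real.log n / n) * Real.sqrt n) * Real.sqrt n := by
            rw [mul_assoc, ← hnn]
        _ = Real.sqrt (Real.log n / n * n) * Real.sqrt n := by
            rw [← Real.sqrt_mul (by positivity)]
        _ = Real.sqrt (Real.log n) * Real.sqrt n := by
            rw [div_mul_cancel₀ _ (ne_of_gt hn0)]
    have hlogle : Real.log n ≤ Real.sqrt (Real.log n) * Real.sqrt n := by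
      have hll : Real.log n ≤ (n:ℝ) := by
        have := Real.log_le_sub_one_of_pos hn0
        linarith
      calc Real.log n = Real.sqrt (Real.log n) * Real.sqrt (Real.log n) :=
            (Real.mul_self_sqrt hlogpos.le).symm
        _ ≤ Real.sqrt (Real.log n) * Real.sqrt n := by
            apply mul_le_mul_of_nonneg_left (Real.sqrt_le_sqrt hll) (Real.sqrt_nonneg _)
    have hbig : 2 * Real.log n ≤ cc ε * p n * n := by
      have hs1 : (2/cc ε) * Real.sqrt (Real.log n / n) * n ≤ p n * n :=
        mul_le_mul_of_nonneg_right hp_ge hn0.le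
      have hs2 : cc ε * ((2/cc ε) * Real.sqrt (Real.log n / n) * n)
          = 2 * (Real.sqrt (Real.log n / n) * n) := by
        field_simp
      calc 2 * Real.log n ≤ 2 * (Real.sqrt (Real.log n) * Real.sqrt n) := by linarith
        _ = 2 * (Real.sqrt (Real.log n / n) * n) := by rw [hsqrtmul]
        _ = cc ε * ((2/cc ε) * Real.sqrt (Real.log n / n) * n) := hs2.symm
        _ ≤ cc ε * (p n * n) := mul_le_mul_of_nonneg_left hs1 hcpos.le
        _ = cc ε * p n * n := by ring
    have hexple : Real.exp (-(cc ε * p n * n)) ≤ 1/(n:ℝ)^2 := by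
      have he1 : Real.exp (-(cc ε * p n * n)) ≤ Real.exp (-(2 * Real.log n)) :=
        Real.exp_le_exp.2 (by linarith)
      have he2 : Real.exp (-(2 * Real.log n)) = 1/(n:ℝ)^2 := by
        rw [Real.exp_neg]
        rw [show (2:ℝ) * Real.log n = ((2:ℕ):ℝ) * Real.log n by norm_num]
        rw [Real.exp_nat_mul, Real.exp_log hn0]
        rw [one_div]
      linarith
    calc (n:ℝ) * Real.exp (-(cc ε * p n * n)) ≤ (n:ℝ) * (1/(n:ℝ)^2) :=
          mul_le_mul_of_nonneg_left hexple hn0.le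
      _ = 1/(n:ℝ) := by field_simp
  -- eventual bound on the bad probability
  have hbadle : ∀ᶠ n : ℕ in atTop,
      gnp n (p n) (Bad n) ≤ ENNReal.ofReal (Real.exp (1/(n:ℝ)) - 1) := by
    filter_upwards [hkey] with n hk
    refine le_trans (bad_bound (p n) ε (hp n).1 (hp n).2 hε) ?_
    apply ENNReal.ofReal_le_ofReal
    have := Real.exp_le_exp.2 hk
    linarith
  -- the bound tends to zero
  have hb0 : Tendsto (fun n : ℕ => ENNReal.ofReal (Real.exp (1/(n:ℝ)) - 1)) atTop (𝓝 0) := by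
    have hr : Tendsto (fun n : ℕ => Real.exp (1/(n:ℝ)) - 1) atTop (𝓝 0) := by
      have h1 : Tendsto (fun n : ℕ => 1/(n:ℝ)) atTop (𝓝 0) :=
        tendsto_one_div_atTop_nhds_zero_nat
      have h2 := (Real.continuous_exp.tendsto 0).comp h1
      have h3 : Tendsto (fun n : ℕ => Real.exp (1/(n:ℝ))) atTop (𝓝 1) := by
        simpa [Real.exp_zero, Function.comp_def] using h2
      simpa using h3.sub_const 1
    rw [show (0:ENNReal) = ENNReal.ofReal 0 by simp]
    exact (ENNReal.continuous_ofReal.tendsto 0).comp hr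
  -- squeeze
  have hlow : Tendsto (fun n : ℕ => 1 - ENNReal.ofReal (Real.exp (1/(n:ℝ)) - 1))
      atTop (𝓝 1) := by
    have := ENNReal.Tendsto.sub (tendsto_const_nhds :
        Tendsto (fun _ : ℕ => (1:ENNReal)) atTop (𝓝 1)) hb0 (Or.inl ENNReal.one_ne_top)
    simpa using this
  apply tendsto_of_tendsto_of_tendsto_of_le_of_le' hlow tendsto_const_nhds
  · filter_upwards [hbadle] with n hb
    have h1 : 1 - gnp n (p n) (Bad n) ≤ gnp n (p n) (Good n) := by
      rw [← MeasureTheory.prob_compl_eq_one_sub (meas_all _)]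
      exact MeasureTheory.measure_mono (hincl n)
    calc 1 - ENNReal.ofReal (Real.exp (1/(n:ℝ)) - 1)
        ≤ 1 - gnp n (p n) (Bad n) := tsub_le_tsub_left hb 1
      _ ≤ gnp n (p n) (Good n) := h1
  · filter_upwards with n
    exact MeasureTheory.prob_le_one

end MonochromaticTrees
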